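/- Let f : ℤ → ℝ with Σ_m |f(m)|/√(1+|m|) < ∞, let n ∈ ℤ, and let S₂(n,t) = Σ_{m≠n} (f(m) - f(n)) ∫₀¹ p_u(n-m) e^{-t²/(4u)}/u du. Then |S₂(n,t) - Σ_{m≠n} (f(m)-f(n)) ∫₀¹ p_u(n-m)/u du| ≤ C t ( √(1+|n|) Σ_m |f(m)|/√(1+|m|) + |f(n)| Σ_m 1/Γ(|m|+1) ) for all t ∈ (0,1); in particular S₂(n,t) → Σ_{m≠n}(f(m)-f(n)) ∫₀¹ p_u(n-m)/u du as t → 0⁺. -/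

import Mathlib

open MeasureTheory Real Set

/-- The modified Bessel function of the first kind of integer order, via its power series. -/
noncomputable def besselI (k : ℕ) (z : ℝ) : ℝ :=
  ∑' m : ℕ, (z/2) ^ (2*m + k) / ((Nat.factorial m : ℝ) * (Nat.factorial (m + k) : ℝ))

/-- The heat kernel of the discrete Laplacian on ℤ: p_u(k) = e^{-2u} I_{|k|}(2u). -/
noncomputable def discHeat (u : ℝ) (k : ℤ) : ℝ := Real.exp (-2*u) * besselI k.natAbs (2*u)

lemma besselI_summand_summable (K : ℕ) (z : ℝ) :
    Summable fun m : ℕ => (z/2) ^ (2*m + K) / ((Nat.factorial m : ℝ) * (Nat.factorial (m + K) : ℝ)) := by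
  apply Summable.of_norm
  have h := (Real.summable_pow_div_factorial ((z/2)^2)).mul_left (|z/2| ^ K)
  apply Summable.of_nonneg_of_le (fun _ => norm_nonneg _) _ h
  intro m
  have h1 : ‖(z/2) ^ (2*m + K) / ((Nat.factorial m : ℝ) * (Nat.factorial (m + K) : ℝ))‖
      = |z/2| ^ (2*m + K) / ((Nat.factorial m : ℝ) * (Nat.factorial (m + K) : ℝ)) := by
    rw [norm_div, norm_pow, Real.norm_eq_abs, Real.norm_eq_abs,
      abs_of_nonneg (by positivity : (0:ℝ) ≤ (Nat.factorial m : ℝ) * (Nat.factorial (m + K) : ℝ))]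
  rw [h1]
  have h2 : |z/2| ^ (2*m + K) = |z/2| ^ K * ((z/2)^2) ^ m := by
    have : ((z/2)^2) ^ m = |z/2| ^ (2*m) := by
      rw [← pow_mul]; exact ((even_two_mul m).pow_abs _).symm
    rw [this, pow_add]; ring
  rw [h2, mul_div_assoc]
  apply mul_le_mul_of_nonneg_left _ (by positivity)
  apply div_le_div_of_nonneg_left (by positivity) (by positivity)
  calc (Nat.factorial m : ℝ) = (Nat.factorial m : ℝ) * 1 := by ring
    _ ≤ (Nat.factorial m : ℝ) * (Nat.factorial (m + K) : ℝ) := by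
        apply mul_le_mul_of_nonneg_left _ (by positivity)
        exact_mod_cast Nat.one_le_iff_ne_zero.mpr (Nat.factorial_ne_zero _)

lemma measurable_discHeat (k : ℤ) : Measurable fun u : ℝ => discHeat u k := by
  unfold discHeat besselI
  apply Measurable.mul (by fun_prop)
  apply measurable_of_tendsto_metrizable
    (f := fun N (u : ℝ) => ∑ m ∈ Finset.range N,
      (2*u/2) ^ (2*m + k.natAbs) / ((Nat.factorial m : ℝ) * (Nat.factorial (m + k.natAbs) : ℝ)))
  · intro N; fun_prop
  · rw [tendsto_pi_nhds]; intro u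
    exact (besselI_summand_summable _ _).hasSum.tendsto_sum_nat

lemma discHeat_nonneg {u : ℝ} (hu : 0 ≤ u) (k : ℤ) : 0 ≤ discHeat u k := by
  unfold discHeat besselI
  apply mul_nonneg (Real.exp_nonneg _)
  apply tsum_nonneg
  intro m
  apply div_nonneg (pow_nonneg (by linarith) _) (by positivity)

lemma discHeat_le {u : ℝ} (hu0 : 0 ≤ u) (hu1 : u ≤ 1) (k : ℤ) :
    discHeat u k ≤ u ^ k.natAbs / (Nat.factorial k.natAbs : ℝ) := by
  set K := k.natAbs with hK
  have key : besselI K (2*u) ≤ Real.exp (u^2) * (u ^ K / (Nat.factorial K : ℝ)) := by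
    unfold besselI
    have h2 : (2*u/2 : ℝ) = u := by ring
    rw [h2]
    have hsum2 : Summable fun m : ℕ => (u ^ K / (Nat.factorial K : ℝ)) * ((u^2) ^ m / (Nat.factorial m : ℝ)) :=
      (Real.summable_pow_div_factorial (u^2)).mul_left _
    have hle : ∀ m : ℕ, u ^ (2*m + K) / ((Nat.factorial m : ℝ) * (Nat.factorial (m + K) : ℝ))
        ≤ (u ^ K / (Nat.factorial K : ℝ)) * ((u^2) ^ m / (Nat.factorial m : ℝ)) := by
      intro m
      have e1 : u ^ (2*m + K) = u ^ K * (u^2) ^ m := by rw [pow_add, ← pow_mul]; ring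
      have e2 : (u ^ K / (Nat.factorial K : ℝ)) * ((u^2) ^ m / (Nat.factorial m : ℝ))
          = u ^ K * (u^2) ^ m / ((Nat.factorial m : ℝ) * (Nat.factorial K : ℝ)) := by ring
      rw [e1, e2]
      apply div_le_div_of_nonneg_left (by positivity) (by positivity)
      have : (Nat.factorial K : ℝ) ≤ (Nat.factorial (m + K) : ℝ) :=
        Nat.cast_le.mpr (Nat.factorial_le (Nat.le_add_left _ _))
      apply mul_le_mul_of_nonneg_left this (by positivity)
    have hsum1 : Summable fun m : ℕ => u ^ (2*m + K) / ((Nat.factorial m : ℝ) * (Nat.factorial (m + K) : ℝ)) := by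
      have := besselI_summand_summable K (2*u)
      simpa [h2] using this
    calc ∑' m : ℕ, u ^ (2*m + K) / ((Nat.factorial m : ℝ) * (Nat.factorial (m + K) : ℝ))
        ≤ ∑' m : ℕ, (u ^ K / (Nat.factorial K : ℝ)) * ((u^2) ^ m / (Nat.factorial m : ℝ)) :=
          Summable.tsum_le_tsum hle hsum1 hsum2
      _ = (u ^ K / (Nat.factorial K : ℝ)) * ∑' m : ℕ, ((u^2) ^ m / (Nat.factorial m : ℝ)) := tsum_mul_left
      _ = Real.exp (u^2) * (u ^ K / (Nat.factorial K : ℝ)) := by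
          rw [Real.exp_eq_exp_ℝ, NormedSpace.exp_eq_tsum_div]; ring
  unfold discHeat
  rw [← hK]
  calc Real.exp (-2*u) * besselI K (2*u)
      ≤ Real.exp (-2*u) * (Real.exp (u^2) * (u ^ K / (Nat.factorial K : ℝ))) :=
        mul_le_mul_of_nonneg_left key (Real.exp_nonneg _)
    _ = Real.exp (u^2 - 2*u) * (u ^ K / (Nat.factorial K : ℝ)) := by
        rw [← mul_assoc, ← Real.exp_add]; ring_nf
    _ ≤ 1 * (u ^ K / (Nat.factorial K : ℝ)) := by
        apply mul_le_mul_of_nonneg_right _ (by positivity)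
        rw [Real.exp_le_one_iff]; nlinarith
    _ = u ^ K / (Nat.factorial K : ℝ) := one_mul _

lemma exp_factor_le_one {u t : ℝ} (hu : 0 < u) : Real.exp (-t^2/(4*u)) ≤ 1 := by
  rw [Real.exp_le_one_iff]
  exact div_nonpos_of_nonpos_of_nonneg (neg_nonpos.mpr (sq_nonneg t)) (by positivity)

lemma fact_pos_real (K : ℕ) : (0:ℝ) < (Nat.factorial K : ℝ) := by
  exact_mod_cast Nat.factorial_pos K

lemma pointwise_le (k : ℤ) (hk : k ≠ 0) (t : ℝ) {u : ℝ} (hu : u ∈ Ioo (0:ℝ) 1) :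
    discHeat u k * Real.exp (-t^2/(4*u)) / u ≤ 1 / (Nat.factorial k.natAbs : ℝ) := by
  obtain ⟨hu0, hu1⟩ := hu
  have hKn : k.natAbs ≠ 0 := Int.natAbs_ne_zero.mpr hk
  have h1 : discHeat u k * Real.exp (-t^2/(4*u)) ≤ u ^ k.natAbs / (Nat.factorial k.natAbs : ℝ) := by
    calc discHeat u k * Real.exp (-t^2/(4*u)) ≤ discHeat u k * 1 :=
          mul_le_mul_of_nonneg_left (exp_factor_le_one hu0) (discHeat_nonneg hu0.le k)
      _ = discHeat u k := mul_one _
      _ ≤ u ^ k.natAbs / (Nat.factorial k.natAbs : ℝ) := discHeat_le hu0.le hu1.le k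
  have h2 : u ^ k.natAbs ≤ u := pow_le_of_le_one hu0.le hu1.le hKn
  calc discHeat u k * Real.exp (-t^2/(4*u)) / u
      ≤ (u ^ k.natAbs / (Nat.factorial k.natAbs : ℝ)) / u := (div_le_div_iff_of_pos_right hu0).mpr h1
    _ = u ^ k.natAbs / ((Nat.factorial k.natAbs : ℝ) * u) := by rw [div_div]
    _ ≤ u / ((Nat.factorial k.natAbs : ℝ) * u) :=
        (div_le_div_iff_of_pos_right (by positivity)).mpr h2
    _ = 1 / (Nat.factorial k.natAbs : ℝ) := by
        field_simp

lemma pointwise_nonneg (k : ℤ) (t : ℝ) {u : ℝ} (hu : u ∈ Ioo (0:ℝ) 1) :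
    0 ≤ discHeat u k * Real.exp (-t^2/(4*u)) / u := by
  apply div_nonneg (mul_nonneg (discHeat_nonneg hu.1.le k) (Real.exp_nonneg _)) hu.1.le

lemma integrableOn_aux (k : ℤ) (hk : k ≠ 0) (t : ℝ) :
    IntegrableOn (fun u : ℝ => discHeat u k * Real.exp (-t^2/(4*u)) / u) (Ioo (0:ℝ) 1) := by
  apply Measure.integrableOn_of_bounded (M := 1 / (Nat.factorial k.natAbs : ℝ))
  · exact (measure_Ioo_lt_top).ne
  · apply Measurable.aestronglyMeasurable
    apply Measurable.div _ measurable_id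
    apply (measurable_discHeat k).mul
    fun_prop
  · filter_upwards [self_mem_ae_restrict measurableSet_Ioo] with u hu
    rw [Real.norm_eq_abs, abs_of_nonneg (pointwise_nonneg k t hu)]
    exact pointwise_le k hk t hu

lemma plain_eq (k : ℤ) : (fun u : ℝ => discHeat u k * Real.exp (-(0:ℝ)^2/(4*u)) / u)
    = fun u : ℝ => discHeat u k / u := by
  funext u; norm_num

lemma integrableOn_plain (k : ℤ) (hk : k ≠ 0) :
    IntegrableOn (fun u : ℝ => discHeat u k / u) (Ioo (0:ℝ) 1) := by
  rw [← plain_eq k]; exact integrableOn_aux k hk 0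

lemma F_nonneg (k : ℤ) (t : ℝ) :
    0 ≤ ∫ u in Ioo (0:ℝ) 1, discHeat u k * Real.exp (-t^2/(4*u)) / u :=
  setIntegral_nonneg measurableSet_Ioo fun _ hu => pointwise_nonneg k t hu

lemma F_le (k : ℤ) (hk : k ≠ 0) (t : ℝ) :
    (∫ u in Ioo (0:ℝ) 1, discHeat u k * Real.exp (-t^2/(4*u)) / u)
      ≤ 1 / (Nat.factorial k.natAbs : ℝ) := by
  calc (∫ u in Ioo (0:ℝ) 1, discHeat u k * Real.exp (-t^2/(4*u)) / u)
      ≤ ∫ _ in Ioo (0:ℝ) 1, 1 / (Nat.factorial k.natAbs : ℝ) :=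
        setIntegral_mono_on (integrableOn_aux k hk t) (integrableOn_const measure_Ioo_lt_top.ne)
          measurableSet_Ioo (fun u hu => pointwise_le k hk t hu)
    _ = 1 / (Nat.factorial k.natAbs : ℝ) := by
        rw [setIntegral_const]
        simp [Real.volume_Ioo]

lemma one_sub_exp_le_sqrt {x : ℝ} (hx : 0 ≤ x) : 1 - Real.exp (-x) ≤ Real.sqrt x := by
  rcases le_total x 1 with h | h
  · have h1 : 1 - Real.exp (-x) ≤ x := by nlinarith [Real.add_one_le_exp (-x)]
    refine h1.trans ?_
    rw [Real.le_sqrt hx]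
    · nlinarith
    · exact hx
  · have h1 : 1 - Real.exp (-x) ≤ 1 := by nlinarith [Real.exp_nonneg (-x)]
    refine h1.trans ?_
    rw [Real.le_sqrt zero_le_one]
    · nlinarith
    · linarith

lemma one_sub_exp_bound {u t : ℝ} (hu : 0 < u) (ht : 0 ≤ t) :
    1 - Real.exp (-t^2/(4*u)) ≤ t / (2 * Real.sqrt u) := by
  have h0 : -t^2/(4*u) = -(t^2/(4*u)) := by ring
  have h := one_sub_exp_le_sqrt (x := t^2/(4*u)) (by positivity)
  rw [h0]
  refine h.trans_eq ?_
  rw [show t^2/(4*u) = (t/(2*Real.sqrt u))^2 by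
      rw [div_pow, mul_pow, Real.sq_sqrt hu.le]; norm_num]
  exact Real.sqrt_sq (by positivity)

lemma rpow_half_integral :
    (∫ u in Ioo (0:ℝ) 1, u ^ (-(1/2) : ℝ)) = 2 := by
  rw [← integral_Ioc_eq_integral_Ioo, ← intervalIntegral.integral_of_le zero_le_one,
    integral_rpow (Or.inl (by norm_num))]
  rw [Real.one_rpow, Real.zero_rpow (by norm_num)]
  norm_num

lemma diff_bound (k : ℤ) (hk : k ≠ 0) {t : ℝ} (ht0 : 0 < t) :
    |(∫ u in Ioo (0:ℝ) 1, discHeat u k / u)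
        - ∫ u in Ioo (0:ℝ) 1, discHeat u k * Real.exp (-t^2/(4*u)) / u|
      ≤ t / (Nat.factorial k.natAbs : ℝ) := by
  set K := k.natAbs with hKdef
  have hKn : K ≠ 0 := Int.natAbs_ne_zero.mpr hk
  have hint1 := integrableOn_plain k hk
  have hint2 := integrableOn_aux k hk t
  rw [← integral_sub hint1 hint2]
  have hptnn : ∀ u ∈ Ioo (0:ℝ) 1,
      0 ≤ discHeat u k / u - discHeat u k * Real.exp (-t^2/(4*u)) / u := by
    intro u hu
    have h1 := exp_factor_le_one (t := t) hu.1
    have h2 := discHeat_nonneg hu.1.le k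
    have h3 : discHeat u k * Real.exp (-t^2/(4*u)) ≤ discHeat u k := by nlinarith
    apply sub_nonneg.mpr
    exact div_le_div_of_nonneg_right h3 hu.1.le |>.trans_eq rfl
  rw [abs_of_nonneg (setIntegral_nonneg measurableSet_Ioo hptnn)]
  have hMint : IntegrableOn (fun u : ℝ => (t / (2 * (Nat.factorial K : ℝ))) * u ^ (-(1/2) : ℝ))
      (Ioo (0:ℝ) 1) :=
    ((intervalIntegral.integrableOn_Ioo_rpow_iff one_pos).mpr (by norm_num)).const_mul _
  have hmono : ∀ u ∈ Ioo (0:ℝ) 1,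
      discHeat u k / u - discHeat u k * Real.exp (-t^2/(4*u)) / u
        ≤ (t / (2 * (Nat.factorial K : ℝ))) * u ^ (-(1/2) : ℝ) := by
    intro u hu
    obtain ⟨hu0, hu1⟩ := hu
    set s := Real.sqrt u with hs
    have hspos : 0 < s := Real.sqrt_pos.mpr hu0
    have hKfac := fact_pos_real K
    have e1 : discHeat u k / u - discHeat u k * Real.exp (-t^2/(4*u)) / u
        = discHeat u k * (1 - Real.exp (-t^2/(4*u))) / u := by ring
    have hub : discHeat u k * (1 - Real.exp (-t^2/(4*u)))
        ≤ (u ^ K / (Nat.factorial K : ℝ)) * (t / (2 * s)) := by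
      apply mul_le_mul (discHeat_le hu0.le hu1.le k) (one_sub_exp_bound hu0 ht0.le)
        (by nlinarith [exp_factor_le_one (t := t) hu0]) (by positivity)
    have e2 : u ^ (-(1/2) : ℝ) = s⁻¹ := by
      rw [Real.rpow_neg hu0.le, ← Real.sqrt_eq_rpow]
    rw [e1, e2]
    have hfin : (u ^ K / (Nat.factorial K : ℝ)) * (t / (2 * s)) / u
        ≤ t / (2 * (Nat.factorial K : ℝ)) * s⁻¹ := by
      have hpow : u ^ K ≤ u := pow_le_of_le_one hu0.le hu1.le hKn
      have hss : s * s = u := Real.mul_self_sqrt hu0.le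
      have step1 : (u ^ K / (Nat.factorial K : ℝ)) * (t / (2 * s)) / u
          ≤ (u / (Nat.factorial K : ℝ)) * (t / (2 * s)) / u := by
        apply div_le_div_of_nonneg_right _ hu0.le
        apply mul_le_mul_of_nonneg_right _ (by positivity)
        exact div_le_div_of_nonneg_right hpow hKfac.le
      refine step1.trans_eq ?_
      rw [← hss]
      field_simp
    calc discHeat u k * (1 - Real.exp (-t^2/(4*u))) / u
        ≤ (u ^ K / (Nat.factorial K : ℝ)) * (t / (2 * s)) / u :=
          div_le_div_of_nonneg_right hub hu0.le |>.trans_eq rfl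
      _ ≤ t / (2 * (Nat.factorial K : ℝ)) * s⁻¹ := hfin
  calc (∫ u in Ioo (0:ℝ) 1, (discHeat u k / u - discHeat u k * Real.exp (-t^2/(4*u)) / u))
      ≤ ∫ u in Ioo (0:ℝ) 1, (t / (2 * (Nat.factorial K : ℝ))) * u ^ (-(1/2) : ℝ) :=
        setIntegral_mono_on (hint1.sub hint2) hMint measurableSet_Ioo hmono
    _ = (t / (2 * (Nat.factorial K : ℝ))) * ∫ u in Ioo (0:ℝ) 1, u ^ (-(1/2) : ℝ) :=
        integral_const_mul _ _
    _ = t / (Nat.factorial K : ℝ) := by rw [rpow_half_integral]; field_simp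

set_option maxHeartbeats 2000000 in
theorem stmt13 (f : ℤ → ℝ)
    (hf : Summable fun m : ℤ => |f m| / Real.sqrt (1 + (m.natAbs : ℝ))) (n : ℤ)
    (S₂ : ℝ → ℝ)
    (hS₂ : ∀ t : ℝ, S₂ t = ∑' m : {m : ℤ // m ≠ n},
      (f m - f n) * ∫ u in Ioo (0:ℝ) 1, discHeat u (n - m) * Real.exp (-t^2/(4*u)) / u) :
    ∃ C > 0, (∀ t ∈ Ioo (0:ℝ) 1,
      |S₂ t - ∑' m : {m : ℤ // m ≠ n},
          (f m - f n) * ∫ u in Ioo (0:ℝ) 1, discHeat u (n - m) / u|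
        ≤ C * t * (Real.sqrt (1 + (n.natAbs : ℝ)) *
            (∑' m : ℤ, |f m| / Real.sqrt (1 + (m.natAbs : ℝ)))
          + |f n| * ∑' m : ℤ, 1 / Real.Gamma ((m.natAbs : ℝ) + 1))) ∧
    Filter.Tendsto S₂ (nhdsWithin 0 (Ioi 0))
      (nhds (∑' m : {m : ℤ // m ≠ n},
        (f m - f n) * ∫ u in Ioo (0:ℝ) 1, discHeat u (n - m) / u)) := by
  have habs_sub : ∀ a b : ℝ, |a - b| ≤ |a| + |b| := fun a b => by
    calc |a - b| = |a + -b| := by rw [sub_eq_add_neg]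
      _ ≤ |a| + |-b| := abs_add_le _ _
      _ = |a| + |b| := by rw [abs_neg]
  set A : ℝ := ∑' m : ℤ, |f m| / Real.sqrt (1 + (m.natAbs : ℝ)) with hA
  set B : ℝ := ∑' m : ℤ, 1 / Real.Gamma ((m.natAbs : ℝ) + 1) with hB
  set c1 : ℝ := Real.sqrt 2 * Real.sqrt (1 + (n.natAbs : ℝ)) with hc1
  set h : ℤ → ℝ := fun m => c1 * (|f m| / Real.sqrt (1 + (m.natAbs : ℝ)))
      + |f n| * (1 / (Nat.factorial (n - m).natAbs : ℝ)) with hh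
  -- summability of factorial series on ℤ
  have hBnat : Summable (fun j : ℕ => 1 / (Nat.factorial j : ℝ)) := by
    simpa using Real.summable_pow_div_factorial 1
  have hBZ : Summable (fun k : ℤ => 1 / (Nat.factorial k.natAbs : ℝ)) := by
    apply Summable.of_nat_of_neg
    · simpa using hBnat
    · simpa using hBnat
  have hBshift : Summable (fun m : ℤ => 1 / (Nat.factorial (n - m).natAbs : ℝ)) :=
    (Equiv.subLeft n).summable_iff.mpr hBZ
  have hsum_h : Summable h := (hf.mul_left c1).add (hBshift.mul_left |f n|)
  have h_nonneg : ∀ m : ℤ, 0 ≤ h m := by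
    intro m
    have h1 : 0 ≤ c1 := mul_nonneg (Real.sqrt_nonneg _) (Real.sqrt_nonneg _)
    have h2 : (0:ℝ) ≤ |f m| / Real.sqrt (1 + (m.natAbs : ℝ)) :=
      div_nonneg (abs_nonneg _) (Real.sqrt_nonneg _)
    have h3 := fact_pos_real (n - m).natAbs
    positivity
  have hA_nonneg : 0 ≤ A :=
    tsum_nonneg fun m => div_nonneg (abs_nonneg _) (Real.sqrt_nonneg _)
  have hB_nonneg : 0 ≤ B := by
    apply tsum_nonneg
    intro m
    have : 0 < Real.Gamma ((m.natAbs : ℝ) + 1) := Real.Gamma_pos_of_pos (by positivity)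
    positivity
  -- sum of h over ℤ
  have htsum_h : ∑' m : ℤ, h m = c1 * A + |f n| * B := by
    rw [hh]
    rw [Summable.tsum_add (hf.mul_left c1) (hBshift.mul_left |f n|), tsum_mul_left, tsum_mul_left]
    congr 1
    congr 1
    have e1 : ∑' m : ℤ, 1 / (Nat.factorial (n - m).natAbs : ℝ)
        = ∑' k : ℤ, 1 / (Nat.factorial k.natAbs : ℝ) :=
      (Equiv.subLeft n).tsum_eq fun k => 1 / (Nat.factorial k.natAbs : ℝ)
    rw [e1, hB]
    apply tsum_congr
    intro k
    rw [Real.Gamma_nat_eq_factorial]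
  -- key per-term claim
  have hterm : ∀ m : ℤ, m ≠ n →
      (|f m| + |f n|) * (1 / (Nat.factorial (n - m).natAbs : ℝ)) ≤ h m := by
    intro m hm
    have hne : n - m ≠ 0 := sub_ne_zero.mpr (Ne.symm hm)
    set K := (n - m).natAbs with hK
    have hK1 : 1 ≤ K := Nat.one_le_iff_ne_zero.mpr (Int.natAbs_ne_zero.mpr hne)
    have hfacpos := fact_pos_real K
    have hs : (0:ℝ) < Real.sqrt (1 + (m.natAbs : ℝ)) := Real.sqrt_pos.mpr (by positivity)
    have key : Real.sqrt (1 + (m.natAbs : ℝ)) ≤ c1 * (Nat.factorial K : ℝ) := by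
      have h1 : (m.natAbs : ℝ) ≤ (n.natAbs : ℝ) + (K : ℝ) := by
        have : m.natAbs ≤ n.natAbs + K := by omega
        exact_mod_cast this
      have hKK : (K:ℝ) ≤ (Nat.factorial K : ℝ) := by exact_mod_cast Nat.self_le_factorial K
      have hfac1 : (1:ℝ) ≤ (Nat.factorial K : ℝ) := by
        exact_mod_cast Nat.one_le_iff_ne_zero.mpr (Nat.factorial_ne_zero K)
      have hKge : (1:ℝ) ≤ (K:ℝ) := by exact_mod_cast hK1
      have hn0 : (0:ℝ) ≤ (n.natAbs : ℝ) := Nat.cast_nonneg _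
      have hfsq : (K:ℝ) ≤ ((Nat.factorial K : ℝ))^2 := by nlinarith
      have h2 : 1 + (m.natAbs : ℝ) ≤ 2 * (1 + (n.natAbs : ℝ)) * ((Nat.factorial K : ℝ))^2 := by
        nlinarith [mul_nonneg hn0 (by nlinarith : (0:ℝ) ≤ 2*((Nat.factorial K : ℝ))^2 - 1)]
      calc Real.sqrt (1 + (m.natAbs : ℝ))
          ≤ Real.sqrt (2 * (1 + (n.natAbs : ℝ)) * ((Nat.factorial K : ℝ))^2) :=
            Real.sqrt_le_sqrt h2
        _ = c1 * (Nat.factorial K : ℝ) := by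
            rw [Real.sqrt_mul (by positivity), Real.sqrt_mul (by norm_num),
              Real.sqrt_sq hfacpos.le, hc1]
    have part1 : |f m| * (1 / (Nat.factorial K : ℝ))
        ≤ c1 * (|f m| / Real.sqrt (1 + (m.natAbs : ℝ))) := by
      rw [mul_one_div, mul_div_assoc']
      rw [div_le_div_iff₀ hfacpos hs]
      calc |f m| * Real.sqrt (1 + (m.natAbs : ℝ))
          ≤ |f m| * (c1 * (Nat.factorial K : ℝ)) :=
            mul_le_mul_of_nonneg_left key (abs_nonneg _)
        _ = c1 * |f m| * (Nat.factorial K : ℝ) := by ring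
    have expand : (|f m| + |f n|) * (1 / (Nat.factorial K : ℝ))
        = |f m| * (1 / (Nat.factorial K : ℝ)) + |f n| * (1 / (Nat.factorial K : ℝ)) := by ring
    rw [expand, hh]
    exact add_le_add part1 le_rfl
  -- series terms
  have hne' : ∀ m : {m : ℤ // m ≠ n}, (n - (m : ℤ)) ≠ 0 :=
    fun m => sub_ne_zero.mpr (Ne.symm m.2)
  have hsub : Summable (fun m : {m : ℤ // m ≠ n} => h (m : ℤ)) :=
    hsum_h.comp_injective Subtype.coe_injective
  have hg_bound : ∀ (t : ℝ) (m : {m : ℤ // m ≠ n}),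
      ‖(f (m:ℤ) - f n) * ∫ u in Ioo (0:ℝ) 1,
          discHeat u (n - (m:ℤ)) * Real.exp (-t^2/(4*u)) / u‖ ≤ h (m : ℤ) := by
    intro t m
    rw [Real.norm_eq_abs, abs_mul]
    have hFn := F_nonneg (n - (m:ℤ)) t
    have hFl := F_le (n - (m:ℤ)) (hne' m) t
    calc |f (m:ℤ) - f n| * |∫ u in Ioo (0:ℝ) 1, discHeat u (n - (m:ℤ)) * Real.exp (-t^2/(4*u)) / u|
        ≤ (|f (m:ℤ)| + |f n|) * (1 / (Nat.factorial (n - (m:ℤ)).natAbs : ℝ)) := by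
          apply mul_le_mul (habs_sub _ _) _ (abs_nonneg _)
            (by positivity)
          rw [abs_of_nonneg hFn]; exact hFl
      _ ≤ h (m : ℤ) := hterm (m : ℤ) m.2
  have hg : ∀ t : ℝ, Summable (fun m : {m : ℤ // m ≠ n} =>
      (f (m:ℤ) - f n) * ∫ u in Ioo (0:ℝ) 1, discHeat u (n - (m:ℤ)) * Real.exp (-t^2/(4*u)) / u) :=
    fun t => Summable.of_norm_bounded hsub (hg_bound t)
  have hL_eq : (∑' m : {m : ℤ // m ≠ n},
        (f (m:ℤ) - f n) * ∫ u in Ioo (0:ℝ) 1, discHeat u (n - (m:ℤ)) / u)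
      = ∑' m : {m : ℤ // m ≠ n},
        (f (m:ℤ) - f n) * ∫ u in Ioo (0:ℝ) 1,
          discHeat u (n - (m:ℤ)) * Real.exp (-(0:ℝ)^2/(4*u)) / u := by
    apply tsum_congr
    intro m
    rw [plain_eq]
  -- the main estimate
  have hmain : ∀ t ∈ Ioo (0:ℝ) 1,
      |S₂ t - ∑' m : {m : ℤ // m ≠ n},
          (f (m:ℤ) - f n) * ∫ u in Ioo (0:ℝ) 1, discHeat u (n - (m:ℤ)) / u|
        ≤ t * (c1 * A + |f n| * B) := by
    intro t ht
    obtain ⟨ht0, ht1⟩ := ht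
    rw [hS₂ t, hL_eq, ← Summable.tsum_sub (hg t) (hg 0)]
    have step1 : ‖∑' m : {m : ℤ // m ≠ n},
        ((f (m:ℤ) - f n) * (∫ u in Ioo (0:ℝ) 1,
            discHeat u (n - (m:ℤ)) * Real.exp (-t^2/(4*u)) / u)
          - (f (m:ℤ) - f n) * ∫ u in Ioo (0:ℝ) 1,
            discHeat u (n - (m:ℤ)) * Real.exp (-(0:ℝ)^2/(4*u)) / u)‖
        ≤ t * ∑' m : {m : ℤ // m ≠ n}, h (m : ℤ) := by
      apply tsum_of_norm_bounded (hsub.hasSum.mul_left t)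
      intro m
      rw [← mul_sub, Real.norm_eq_abs, abs_mul]
      have hdb := diff_bound (n - (m:ℤ)) (hne' m) ht0
      have hd : |(∫ u in Ioo (0:ℝ) 1, discHeat u (n - (m:ℤ)) * Real.exp (-t^2/(4*u)) / u)
          - ∫ u in Ioo (0:ℝ) 1, discHeat u (n - (m:ℤ)) * Real.exp (-(0:ℝ)^2/(4*u)) / u|
          ≤ t / (Nat.factorial (n - (m:ℤ)).natAbs : ℝ) := by
        rw [plain_eq, abs_sub_comm]
        exact hdb
      calc |f (m:ℤ) - f n| * |(∫ u in Ioo (0:ℝ) 1, discHeat u (n - (m:ℤ)) * Real.exp (-t^2/(4*u)) / u)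
            - ∫ u in Ioo (0:ℝ) 1, discHeat u (n - (m:ℤ)) * Real.exp (-(0:ℝ)^2/(4*u)) / u|
          ≤ (|f (m:ℤ)| + |f n|) * (t / (Nat.factorial (n - (m:ℤ)).natAbs : ℝ)) :=
            mul_le_mul (habs_sub _ _) hd (abs_nonneg _) (by positivity)
        _ = t * ((|f (m:ℤ)| + |f n|) * (1 / (Nat.factorial (n - (m:ℤ)).natAbs : ℝ))) := by ring
        _ ≤ t * h (m : ℤ) := by
            apply mul_le_mul_of_nonneg_left (hterm (m : ℤ) m.2) ht0.le
    rw [Real.norm_eq_abs] at step1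
    refine step1.trans ?_
    apply mul_le_mul_of_nonneg_left _ ht0.le
    rw [← htsum_h]
    exact Summable.tsum_subtype_le h {m : ℤ | m ≠ n} h_nonneg hsum_h
  refine ⟨2, by norm_num, ?_, ?_⟩
  · intro t ht
    refine (hmain t ht).trans ?_
    have hsqrt2 : Real.sqrt 2 ≤ 2 := by
      nlinarith [Real.sq_sqrt (by norm_num : (0:ℝ) ≤ 2), Real.sqrt_nonneg (2:ℝ)]
    have hsn : (0:ℝ) ≤ Real.sqrt (1 + (n.natAbs : ℝ)) := Real.sqrt_nonneg _
    have hfn : (0:ℝ) ≤ |f n| := abs_nonneg _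
    have ht0 := ht.1.le
    have h1 : c1 * A ≤ 2 * (Real.sqrt (1 + (n.natAbs : ℝ)) * A) := by
      rw [hc1]
      nlinarith [mul_nonneg hsn hA_nonneg, Real.sqrt_nonneg (2:ℝ)]
    have h2 : |f n| * B ≤ 2 * (|f n| * B) := by nlinarith [mul_nonneg hfn hB_nonneg]
    nlinarith [mul_nonneg ht0 (mul_nonneg hsn hA_nonneg), mul_nonneg ht0 (mul_nonneg hfn hB_nonneg)]
  · set L := ∑' m : {m : ℤ // m ≠ n},
        (f (m:ℤ) - f n) * ∫ u in Ioo (0:ℝ) 1, discHeat u (n - (m:ℤ)) / u with hLdef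
    have hdiff : Filter.Tendsto (fun t => S₂ t - L) (nhdsWithin 0 (Ioi 0)) (nhds 0) := by
      apply squeeze_zero_norm' (a := fun t => t * (c1 * A + |f n| * B))
      · filter_upwards [Ioo_mem_nhdsGT_of_mem (by norm_num : (0:ℝ) ∈ Ico (0:ℝ) 1)] with t ht
        rw [Real.norm_eq_abs]
        exact hmain t ht
      · have : Filter.Tendsto (fun t : ℝ => t * (c1 * A + |f n| * B)) (nhds 0)
            (nhds (0 * (c1 * A + |f n| * B))) :=
          (continuous_id.mul continuous_const).tendsto 0
        rw [zero_mul] at this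
        exact this.mono_left nhdsWithin_le_nhds
    have := hdiff.add (tendsto_const_nhds (x := L))
    simpa using this
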